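/- Let T: X ⇉ X* with 0 ∈ T(x⋆) be monotone, φ strictly convex smooth super-coercive with ∇φ(0)=0 and ∇φ* continuous and strictly monotone. Suppose vᵏ ∈ T(x^{k+1}) and x^{k+1} = xᵏ − ∇φ*(vᵏ) for all k, and suppose vᵏ → v⋆ converges. Then v⋆ = 0. -/

import Mathlib

open scoped RealInnerProductSpace

/-- If the dual iterates of the anisotropic proximal point algorithm converge,
their limit is `0`. -/
theorem stmt12 {X : Type*} [NormedAddCommGroup X] [InnerProductSpace ℝ X] [CompleteSpace X]
    (φ : X → ℝ) (gφ gφs : X → X)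
    (hconv : StrictConvexOn ℝ Set.univ φ)
    (hgrad : ∀ x, HasGradientAt φ (gφ x) x)
    (hsc : Filter.Tendsto (fun x => φ x / ‖x‖) (Filter.cocompact X) Filter.atTop)
    (hinv1 : Function.LeftInverse gφs gφ)
    (hinv2 : Function.RightInverse gφs gφ)
    (h0 : gφ 0 = 0)
    (hcont : Continuous gφs)
    (hsmono : ∀ u w : X, u ≠ w → 0 < ⟪gφs u - gφs w, u - w⟫)
    (T : X → Set X)
    (hmono : ∀ a b u w : X, u ∈ T a → w ∈ T b → 0 ≤ ⟪u - w, a - b⟫)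
    (xstar : X) (hstar : (0 : X) ∈ T xstar)
    (x v : ℕ → X)
    (hv : ∀ k, v k ∈ T (x (k + 1)))
    (hx : ∀ k, x (k + 1) = x k - gφs (v k))
    (vstar : X) (hlim : Filter.Tendsto v Filter.atTop (nhds vstar)) :
    vstar = 0 := by
  by_contra hne
  have hgs0 : gφs 0 = 0 := by
    have := hinv1 0
    rwa [h0] at this
  -- positivity constant
  have hc : 0 < ⟪gφs vstar, vstar⟫ := by
    have := hsmono vstar 0 hne
    simpa [hgs0] using this
  -- sum formula for iterates
  have hxsum : ∀ n : ℕ, x n = x 0 - ∑ i ∈ Finset.range n, gφs (v i) := by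
    intro n
    induction n with
    | zero => simp
    | succ n ih =>
      rw [hx n, ih, Finset.sum_range_succ]
      abel
  -- Cesàro limit
  have hgv : Filter.Tendsto (fun n => gφs (v n)) Filter.atTop (nhds (gφs vstar)) :=
    (hcont.tendsto vstar).comp hlim
  have hces : Filter.Tendsto
      (fun n : ℕ => ((n : ℝ))⁻¹ • ∑ i ∈ Finset.range n, gφs (v i))
      Filter.atTop (nhds (gφs vstar)) := hgv.cesaro_smul
  have hces' : Filter.Tendsto
      (fun n : ℕ => (((n : ℝ) + 1))⁻¹ • ∑ i ∈ Finset.range (n + 1), gφs (v i))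
      Filter.atTop (nhds (gφs vstar)) := by
    have := hces.comp (Filter.tendsto_add_atTop_nat 1)
    simp only [Function.comp_def] at this
    convert this using 2 with n
    push_cast
    ring
  -- (x0 - xstar)/(n+1) → 0
  have h0lim : Filter.Tendsto
      (fun n : ℕ => (((n : ℝ) + 1))⁻¹ • (x 0 - xstar)) Filter.atTop (nhds 0) := by
    have h1 : Filter.Tendsto (fun n : ℕ => (((n : ℝ) + 1))⁻¹) Filter.atTop (nhds 0) := by
      have := Filter.Tendsto.comp tendsto_inv_atTop_zero
        (Filter.tendsto_atTop_add_const_right Filter.atTop (1 : ℝ)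
          tendsto_natCast_atTop_atTop)
      exact this
    simpa using h1.smul_const (x 0 - xstar)
  -- y n → -(gφs vstar)
  have hy : Filter.Tendsto
      (fun n : ℕ => (((n : ℝ) + 1))⁻¹ • (x (n + 1) - xstar)) Filter.atTop
      (nhds (-(gφs vstar))) := by
    have heq : ∀ n : ℕ, (((n : ℝ) + 1))⁻¹ • (x (n + 1) - xstar)
        = (((n : ℝ) + 1))⁻¹ • (x 0 - xstar)
          - (((n : ℝ) + 1))⁻¹ • ∑ i ∈ Finset.range (n + 1), gφs (v i) := by
      intro n
      rw [hxsum (n + 1), ← smul_sub]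
      congr 1
      abel
    simp only [heq]
    have := h0lim.sub hces'
    simpa using this
  -- inner product limit
  have hinner : Filter.Tendsto
      (fun n : ℕ => ⟪v n, (((n : ℝ) + 1))⁻¹ • (x (n + 1) - xstar)⟫)
      Filter.atTop (nhds ⟪vstar, -(gφs vstar)⟫) :=
    hlim.inner hy
  have hlimneg : ⟪vstar, -(gφs vstar)⟫ < 0 := by
    rw [inner_neg_right]
    rw [real_inner_comm] at hc
    linarith
  -- but each term is nonneg
  have hnonneg : ∀ n : ℕ, 0 ≤ ⟪v n, (((n : ℝ) + 1))⁻¹ • (x (n + 1) - xstar)⟫ := by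
    intro n
    rw [real_inner_smul_right]
    have h1 : 0 ≤ ⟪v n - 0, x (n + 1) - xstar⟫ := hmono _ _ _ _ (hv n) hstar
    have h2 : (0 : ℝ) ≤ ((n : ℝ) + 1)⁻¹ := by positivity
    simp only [sub_zero] at h1
    exact mul_nonneg h2 h1
  have := le_of_tendsto_of_tendsto' tendsto_const_nhds hinner hnonneg
  linarith
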